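/- Under the same setup, with the additional assumption q_k - ps \ne 0 for all k, the identity \lambda_n(s) = (n+1) \sum_{k=1}^m (a_k q_k / (q_k - ps)) \lambda_{n+1}(s - q_k/p) holds for all n \ge 0. -/

import Mathlib

open PowerSeries Finset
noncomputable section

/-- Coefficient-wise composition `f ∘ g` of formal power series; this agrees with the
usual composition when `g` has zero constant term. -/
def scomp (f g : PowerSeries ℂ) : PowerSeries ℂ :=
  PowerSeries.mk fun N => ∑ n ∈ Finset.range (N + 1),
    (PowerSeries.coeff n f) * (PowerSeries.coeff N (g ^ n))

/-- The exponential series `∑ t^n/n!`. -/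
def expS : PowerSeries ℂ := PowerSeries.mk fun n => 1 / (n.factorial : ℂ)

/-- The series `log(1+t) = ∑_{n≥1} (-1)^{n+1} t^n / n`. -/
def logS : PowerSeries ℂ := PowerSeries.mk fun n => if n = 0 then 0 else (-1) ^ (n + 1) / (n : ℂ)

/-- Complex power `φ^q := exp (q · log φ)`, well defined when `φ` has constant term 1. -/
def cpow (φ : PowerSeries ℂ) (q : ℂ) : PowerSeries ℂ :=
  scomp expS (q • scomp logS (φ - 1))

/-- Formal derivative. -/
def D (f : PowerSeries ℂ) : PowerSeries ℂ :=
  PowerSeries.mk fun n => ((n + 1 : ℕ) : ℂ) * PowerSeries.coeff (n + 1) f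

/-- Generalized binomial coefficient `binom(t, k) = t(t-1)⋯(t-k+1)/k!`. -/
def gbinom (t : ℂ) (k : ℕ) : ℂ := (∏ j ∈ Finset.range k, (t - j)) / (k.factorial : ℂ)

/-- The ordinary Bell polynomial `B_{n,k}(x_1, …, x_{n-k+1})`. -/
def ordBell (n k : ℕ) (x : ℕ → ℂ) : ℂ :=
  ∑ i : Fin (n - k + 1) → Fin (n + 1),
    if (∑ j, (i j : ℕ)) = k ∧ (∑ j, (j.1 + 1) * (i j : ℕ)) = n then
      ((k.factorial : ℂ) / ∏ j, ((i j : ℕ).factorial : ℂ)) * ∏ j, x (j.1 + 1) ^ (i j : ℕ)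
    else 0

namespace Aux

lemma coeff_D (f : PowerSeries ℂ) (n : ℕ) :
    PowerSeries.coeff n (D f) = ((n + 1 : ℕ) : ℂ) * PowerSeries.coeff (n + 1) f := by
  simp [D]

lemma D_eq (f : PowerSeries ℂ) : D f = d⁄dX ℂ f := by
  ext n
  rw [coeff_D, PowerSeries.coeff_derivative]
  push_cast; ring

lemma coeff_scomp (f g : PowerSeries ℂ) (N : ℕ) :
    PowerSeries.coeff N (scomp f g) =
      ∑ n ∈ range (N + 1), PowerSeries.coeff n f * PowerSeries.coeff N (g ^ n) := by
  simp [scomp]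

lemma D_add (f g : PowerSeries ℂ) : D (f + g) = D f + D g := by
  ext n; simp [coeff_D]; ring

lemma D_smul (c : ℂ) (f : PowerSeries ℂ) : D (c • f) = c • D f := by
  ext n; simp [coeff_D]; ring

lemma D_one : D (1 : PowerSeries ℂ) = 0 := by
  ext n; simp [coeff_D, PowerSeries.coeff_one]

lemma D_sum {ι : Type*} (s : Finset ι) (f : ι → PowerSeries ℂ) :
    D (∑ k ∈ s, f k) = ∑ k ∈ s, D (f k) := by
  ext n; simp [coeff_D, Finset.mul_sum]

lemma D_mul (f g : PowerSeries ℂ) : D (f * g) = f * D g + g * D f := by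
  simp [D_eq, Derivation.leibniz, smul_eq_mul]

lemma coeff_pow_eq_zero {g : PowerSeries ℂ} (hg : PowerSeries.constantCoeff g = 0) :
    ∀ {n N : ℕ}, N < n → PowerSeries.coeff N (g ^ n) = 0 := by
  intro n
  induction n with
  | zero => intro N h; omega
  | succ n ih =>
    intro N h
    rw [pow_succ, PowerSeries.coeff_mul]
    apply Finset.sum_eq_zero
    rintro ⟨i, j⟩ hij
    rw [Finset.HasAntidiagonal.mem_antidiagonal] at hij
    rcases Nat.eq_zero_or_pos j with hj | hj
    · subst hj
      simp only [PowerSeries.coeff_zero_eq_constantCoeff, hg, mul_zero]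
    · have : i < n := by omega
      rw [ih this, zero_mul]

lemma coeff_pow_mul_eq_zero {g : PowerSeries ℂ} (hg : PowerSeries.constantCoeff g = 0)
    (H : PowerSeries ℂ) {n N : ℕ} (h : N < n) :
    PowerSeries.coeff N (g ^ n * H) = 0 := by
  rw [PowerSeries.coeff_mul]
  apply Finset.sum_eq_zero
  rintro ⟨i, j⟩ hij
  rw [Finset.HasAntidiagonal.mem_antidiagonal] at hij
  have : i < n := by omega
  rw [coeff_pow_eq_zero hg this, zero_mul]

lemma coeff_scomp_ext (f : PowerSeries ℂ) {g : PowerSeries ℂ}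
    (hg : PowerSeries.constantCoeff g = 0) {N M : ℕ} (h : N ≤ M) :
    PowerSeries.coeff N (scomp f g) =
      ∑ n ∈ range (M + 1), PowerSeries.coeff n f * PowerSeries.coeff N (g ^ n) := by
  rw [coeff_scomp]
  apply Finset.sum_subset
  · exact Finset.range_subset_range.mpr (by omega)
  · intro n hn hn'
    rw [Finset.mem_range] at hn hn'
    rw [coeff_pow_eq_zero hg (by omega), mul_zero]




lemma D_scomp (f : PowerSeries ℂ) {g : PowerSeries ℂ}
    (hg : PowerSeries.constantCoeff g = 0) :
    D (scomp f g) = scomp (D f) g * D g := by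
  ext N
  rw [coeff_D, coeff_scomp, PowerSeries.coeff_mul]
  -- RHS
  have hRHS : ∑ x ∈ antidiagonal N,
      PowerSeries.coeff x.1 (scomp (D f) g) * PowerSeries.coeff x.2 (D g)
      = ∑ n ∈ range (N + 1), ((n + 1 : ℕ) : ℂ) * PowerSeries.coeff (n + 1) f *
          PowerSeries.coeff N (g ^ n * D g) := by
    have h1 : ∀ x ∈ antidiagonal N,
        PowerSeries.coeff x.1 (scomp (D f) g) * PowerSeries.coeff x.2 (D g)
        = ∑ n ∈ range (N + 1), ((n + 1 : ℕ) : ℂ) * PowerSeries.coeff (n + 1) f *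
            (PowerSeries.coeff x.1 (g ^ n) * PowerSeries.coeff x.2 (D g)) := by
      rintro ⟨i, j⟩ hij
      rw [Finset.HasAntidiagonal.mem_antidiagonal] at hij
      rw [coeff_scomp_ext (D f) hg (show i ≤ N by omega), Finset.sum_mul]
      apply Finset.sum_congr rfl
      intro n _
      rw [coeff_D]; ring
    rw [Finset.sum_congr rfl h1, Finset.sum_comm]
    apply Finset.sum_congr rfl
    intro n _
    rw [← Finset.mul_sum, PowerSeries.coeff_mul]
  rw [hRHS]
  -- LHS
  have hD1 : ∀ n : ℕ, PowerSeries.coeff N (D (g ^ (n+1)))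
      = ((n + 1 : ℕ) : ℂ) * PowerSeries.coeff N (g ^ n * D g) := by
    intro n
    have : D (g ^ (n+1)) = (n+1 : ℕ) • (g ^ n * D g) := by
      rw [D_eq]
      have := Derivation.leibniz_pow (d⁄dX ℂ) (n+1) (a := g)
      rw [this]
      simp [smul_eq_mul, ← D_eq]
    rw [this, map_nsmul, nsmul_eq_mul]
  calc ((N + 1 : ℕ) : ℂ) * ∑ n ∈ range (N + 1 + 1),
        PowerSeries.coeff n f * PowerSeries.coeff (N + 1) (g ^ n)
      = ∑ n ∈ range (N + 2), PowerSeries.coeff n f *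
          (((N + 1 : ℕ) : ℂ) * PowerSeries.coeff (N + 1) (g ^ n)) := by
        rw [Finset.mul_sum]; apply Finset.sum_congr rfl; intro n _; ring
    _ = ∑ n ∈ range (N + 2), PowerSeries.coeff n f * PowerSeries.coeff N (D (g ^ n)) := by
        apply Finset.sum_congr rfl; intro n _; rw [coeff_D]
    _ = ∑ n ∈ range (N + 1), PowerSeries.coeff (n+1) f * PowerSeries.coeff N (D (g ^ (n+1)))
          + PowerSeries.coeff 0 f * PowerSeries.coeff N (D (g ^ 0)) := by
        rw [Finset.sum_range_succ']
    _ = ∑ n ∈ range (N + 1), ((n + 1 : ℕ) : ℂ) * PowerSeries.coeff (n + 1) f *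
          PowerSeries.coeff N (g ^ n * D g) := by
        rw [pow_zero, D_one]
        simp only [map_zero, mul_zero, add_zero]
        apply Finset.sum_congr rfl; intro n _; rw [hD1]; ring

lemma scomp_one_left (g : PowerSeries ℂ) : scomp 1 g = 1 := by
  ext N
  rw [coeff_scomp]
  rw [Finset.sum_eq_single 0]
  · simp
  · intro n _ hn
    rw [PowerSeries.coeff_one, if_neg hn, zero_mul]
  · intro h; simp at h

lemma scomp_add_left (f₁ f₂ g : PowerSeries ℂ) :
    scomp (f₁ + f₂) g = scomp f₁ g + scomp f₂ g := by
  ext N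
  simp only [coeff_scomp, map_add, ← Finset.sum_add_distrib]
  exact Finset.sum_congr rfl fun n _ => by ring

lemma scomp_X_mul_left (h : PowerSeries ℂ) {g : PowerSeries ℂ}
    (hg : PowerSeries.constantCoeff g = 0) :
    scomp (PowerSeries.X * h) g = g * scomp h g := by
  ext N
  rw [coeff_scomp]
  rw [Finset.sum_range_succ']
  have h0 : PowerSeries.coeff 0 (PowerSeries.X * h) = 0 := by
    simp
  rw [h0, zero_mul, add_zero]
  have h1 : ∀ n : ℕ, PowerSeries.coeff (n + 1) (PowerSeries.X * h)
      = PowerSeries.coeff n h := by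
    intro n; rw [PowerSeries.coeff_succ_X_mul]
  have hR : PowerSeries.coeff N (g * scomp h g)
      = ∑ n ∈ range (N + 1), PowerSeries.coeff n h * PowerSeries.coeff N (g * g ^ n) := by
    rw [PowerSeries.coeff_mul]
    have : ∀ x ∈ antidiagonal N,
        PowerSeries.coeff x.1 g * PowerSeries.coeff x.2 (scomp h g)
        = ∑ n ∈ range (N + 1), PowerSeries.coeff n h *
            (PowerSeries.coeff x.1 g * PowerSeries.coeff x.2 (g ^ n)) := by
      rintro ⟨i, j⟩ hij
      rw [Finset.HasAntidiagonal.mem_antidiagonal] at hij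
      rw [coeff_scomp_ext h hg (show j ≤ N by omega), Finset.mul_sum]
      apply Finset.sum_congr rfl; intro n _; ring
    rw [Finset.sum_congr rfl this, Finset.sum_comm]
    apply Finset.sum_congr rfl
    intro n _
    rw [← Finset.mul_sum, PowerSeries.coeff_mul]
  rw [hR, Finset.sum_range_succ]
  have : PowerSeries.coeff N (g * g ^ N) = 0 := by
    rw [← pow_succ']
    exact coeff_pow_eq_zero hg (by omega)
  rw [this, mul_zero, add_zero]
  apply Finset.sum_congr rfl
  intro n _
  rw [h1, ← pow_succ']




lemma ode_uniq (u y₁ y₂ : PowerSeries ℂ) (h1 : D y₁ = u * y₁) (h2 : D y₂ = u * y₂)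
    (h0 : PowerSeries.constantCoeff y₁ = PowerSeries.constantCoeff y₂) : y₁ = y₂ := by
  ext N
  induction N using Nat.strong_induction_on with
  | _ N ih =>
    match N with
    | 0 => simpa using h0
    | Nat.succ N =>
      have hN1 : ((N + 1 : ℕ) : ℂ) ≠ 0 := Nat.cast_ne_zero.mpr (Nat.succ_ne_zero N)
      have e1 : ((N + 1 : ℕ) : ℂ) * PowerSeries.coeff (N + 1) y₁
          = PowerSeries.coeff N (u * y₁) := by rw [← coeff_D, h1]
      have e2 : ((N + 1 : ℕ) : ℂ) * PowerSeries.coeff (N + 1) y₂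
          = PowerSeries.coeff N (u * y₂) := by rw [← coeff_D, h2]
      have e3 : PowerSeries.coeff N (u * y₁) = PowerSeries.coeff N (u * y₂) := by
        rw [PowerSeries.coeff_mul, PowerSeries.coeff_mul]
        apply Finset.sum_congr rfl
        rintro ⟨i, j⟩ hij
        rw [Finset.HasAntidiagonal.mem_antidiagonal] at hij
        rw [ih j (by omega)]
      exact mul_left_cancel₀ hN1 (by rw [e1, e2, e3])

lemma constantCoeff_scomp (f g : PowerSeries ℂ) :
    PowerSeries.constantCoeff (scomp f g) = PowerSeries.constantCoeff f := by
  rw [← PowerSeries.coeff_zero_eq_constantCoeff, coeff_scomp]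
  simp

lemma D_expS : D expS = expS := by
  ext n
  rw [coeff_D]
  simp only [expS, PowerSeries.coeff_mk]
  rw [Nat.factorial_succ]
  have h1 : ((n : ℂ) + 1) ≠ 0 := by
    have := Nat.cast_add_one_ne_zero (R := ℂ) n
    exact_mod_cast this
  have h2 : ((n.factorial : ℕ) : ℂ) ≠ 0 := Nat.cast_ne_zero.mpr n.factorial_ne_zero
  push_cast
  field_simp

lemma constantCoeff_expS : PowerSeries.constantCoeff expS = 1 := by
  rw [← PowerSeries.coeff_zero_eq_constantCoeff]
  simp [expS]

lemma D_exp_comp {A : PowerSeries ℂ} (hA : PowerSeries.constantCoeff A = 0) :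
    D (scomp expS A) = scomp expS A * D A := by
  rw [D_scomp expS hA, D_expS]

lemma exp_comp_add {A B : PowerSeries ℂ} (hA : PowerSeries.constantCoeff A = 0)
    (hB : PowerSeries.constantCoeff B = 0) :
    scomp expS (A + B) = scomp expS A * scomp expS B := by
  have hAB : PowerSeries.constantCoeff (A + B) = 0 := by rw [map_add, hA, hB, add_zero]
  apply ode_uniq (D A + D B)
  · rw [D_exp_comp hAB, ← D_add]; exact mul_comm _ _
  · rw [D_mul, D_exp_comp hA, D_exp_comp hB]; ring
  · rw [constantCoeff_scomp, map_mul, constantCoeff_scomp, constantCoeff_scomp,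
      constantCoeff_expS]; norm_num

lemma D_logS_eq : D logS = PowerSeries.mk fun n => (-1 : ℂ) ^ n := by
  ext n
  rw [coeff_D]
  simp only [logS, PowerSeries.coeff_mk, Nat.succ_ne_zero, if_false]
  have h1 : ((n : ℂ) + 1) ≠ 0 := by
    have := Nat.cast_add_one_ne_zero (R := ℂ) n
    exact_mod_cast this
  push_cast
  rw [pow_succ, pow_succ]
  field_simp

lemma one_add_X_mul_DlogS : (1 + PowerSeries.X) * D logS = 1 := by
  rw [D_logS_eq]
  ext n
  rw [add_mul, one_mul, map_add]
  cases n with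
  | zero => simp
  | succ n =>
    rw [PowerSeries.coeff_succ_X_mul]
    simp only [PowerSeries.coeff_mk, PowerSeries.coeff_one, Nat.succ_ne_zero, if_false]
    rw [pow_succ]
    ring

lemma mul_scomp_DlogS {g : PowerSeries ℂ} (hg : PowerSeries.constantCoeff g = 0) :
    (1 + g) * scomp (D logS) g = 1 := by
  have h2 : scomp ((1 + PowerSeries.X) * D logS) g = (1 + g) * scomp (D logS) g := by
    rw [add_mul (1 : PowerSeries ℂ) PowerSeries.X (D logS), one_mul, scomp_add_left,
      scomp_X_mul_left (D logS) hg]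
    ring
  rw [← h2, one_add_X_mul_DlogS, scomp_one_left]

lemma constantCoeff_logcomp (φ : PowerSeries ℂ) (s : ℂ) :
    PowerSeries.constantCoeff (s • scomp logS (φ - 1)) = 0 := by
  rw [← PowerSeries.coeff_zero_eq_constantCoeff, PowerSeries.coeff_smul,
    PowerSeries.coeff_zero_eq_constantCoeff, constantCoeff_scomp]
  have : PowerSeries.constantCoeff logS = 0 := by
    rw [← PowerSeries.coeff_zero_eq_constantCoeff]; simp [logS]
  rw [this, smul_zero]

lemma constantCoeff_cpow (φ : PowerSeries ℂ) (s : ℂ) :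
    PowerSeries.constantCoeff (cpow φ s) = 1 := by
  rw [cpow, constantCoeff_scomp, constantCoeff_expS]

lemma cpow_add (φ : PowerSeries ℂ) (s t : ℂ) :
    cpow φ (s + t) = cpow φ s * cpow φ t := by
  rw [cpow, cpow, cpow, add_smul]
  exact exp_comp_add (constantCoeff_logcomp φ s) (constantCoeff_logcomp φ t)

lemma mul_D_cpow (φ : PowerSeries ℂ) (hφ : PowerSeries.constantCoeff φ = 1) (s : ℂ) :
    φ * D (cpow φ s) = s • (D φ * cpow φ s) := by
  have hg : PowerSeries.constantCoeff (φ - 1) = 0 := by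
    rw [map_sub, hφ, map_one, sub_self]
  have hDL : φ * D (scomp logS (φ - 1)) = D φ := by
    rw [D_scomp logS hg]
    have hsub : D (φ - 1) = D φ := by
      have : φ - 1 + 1 = φ := by ring
      calc D (φ - 1) = D (φ - 1) + D 1 := by rw [D_one, add_zero]
        _ = D (φ - 1 + 1) := (D_add _ _).symm
        _ = D φ := by rw [this]
    have h2 := mul_scomp_DlogS (g := φ - 1) hg
    have h1 : (1 : PowerSeries ℂ) + (φ - 1) = φ := by ring
    rw [h1] at h2
    rw [hsub, ← mul_assoc, h2, one_mul]
  rw [cpow, D_exp_comp (constantCoeff_logcomp φ s)]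
  set A := s • scomp logS (φ - 1) with hA
  rw [show D A = s • D (scomp logS (φ - 1)) from D_smul _ _]
  have key : φ * (scomp expS A * D (scomp logS (φ - 1))) = D φ * scomp expS A := by
    rw [← hDL]; ring
  calc φ * (scomp expS A * (s • D (scomp logS (φ - 1))))
      = s • (φ * (scomp expS A * D (scomp logS (φ - 1)))) := by
        rw [mul_smul_comm, mul_smul_comm]
    _ = s • (D φ * scomp expS A) := by rw [key]


lemma coeff_D_pow_succ (g : PowerSeries ℂ) (n N : ℕ) :
    PowerSeries.coeff N (D (g ^ (n + 1)))
      = ((n + 1 : ℕ) : ℂ) * PowerSeries.coeff N (g ^ n * D g) := by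
  have : D (g ^ (n+1)) = (n+1 : ℕ) • (g ^ n * D g) := by
    rw [D_eq]
    have := Derivation.leibniz_pow (d⁄dX ℂ) (n+1) (a := g)
    rw [this]
    simp [smul_eq_mul, ← D_eq]
  rw [this, map_nsmul, nsmul_eq_mul]

lemma coeff_pow_self {F : PowerSeries ℂ} (hF0 : PowerSeries.constantCoeff F = 0) :
    ∀ n : ℕ, PowerSeries.coeff n (F ^ n) = (PowerSeries.coeff 1 F) ^ n := by
  intro n
  induction n with
  | zero => simp
  | succ n ih =>
    rw [pow_succ, PowerSeries.coeff_mul, Finset.sum_eq_single (n, 1)]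
    · rw [ih, pow_succ]
    · rintro ⟨i, j⟩ hmem hne
      rw [Finset.HasAntidiagonal.mem_antidiagonal] at hmem
      by_cases hi : i < n
      · rw [coeff_pow_eq_zero hF0 hi, zero_mul]
      · have hij : ¬(i = n ∧ j = 1) := by
          intro ⟨h1, h2⟩; exact hne (by rw [h1, h2])
        have hj : j = 0 := by omega
        rw [hj, PowerSeries.coeff_zero_eq_constantCoeff, hF0, mul_zero]
    · intro h
      exact absurd (Finset.HasAntidiagonal.mem_antidiagonal.mpr (by omega)) h

lemma coeff_pow_mul_self {F : PowerSeries ℂ} (hF0 : PowerSeries.constantCoeff F = 0)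
    (H : PowerSeries ℂ) (N : ℕ) :
    PowerSeries.coeff N (F ^ N * H)
      = (PowerSeries.coeff 1 F) ^ N * PowerSeries.coeff 0 H := by
  rw [PowerSeries.coeff_mul, Finset.sum_eq_single (N, 0)]
  · rw [coeff_pow_self hF0]
  · rintro ⟨i, j⟩ hmem hne
    rw [Finset.HasAntidiagonal.mem_antidiagonal] at hmem
    have hi : i < N := by
      have : ¬(i = N ∧ j = 0) := by intro ⟨h1, h2⟩; exact hne (by rw [h1, h2])
      omega
    rw [coeff_pow_eq_zero hF0 hi, zero_mul]
  · intro h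
    exact absurd (Finset.HasAntidiagonal.mem_antidiagonal.mpr (by omega)) h

lemma expand_uniq {F H : PowerSeries ℂ} (hF0 : PowerSeries.constantCoeff F = 0)
    (hF1 : PowerSeries.coeff 1 F ≠ 0) (hH0 : PowerSeries.coeff 0 H ≠ 0)
    (c d : ℕ → ℂ)
    (h : ∀ N : ℕ, ∑ n ∈ range (N + 1), c n * PowerSeries.coeff N (F ^ n * H)
        = ∑ n ∈ range (N + 1), d n * PowerSeries.coeff N (F ^ n * H)) :
    ∀ n, c n = d n := by
  intro n
  induction n using Nat.strong_induction_on with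
  | _ n ih =>
    have hN := h n
    rw [Finset.sum_range_succ, Finset.sum_range_succ] at hN
    have heq : ∑ i ∈ range n, c i * PowerSeries.coeff n (F ^ i * H)
        = ∑ i ∈ range n, d i * PowerSeries.coeff n (F ^ i * H) :=
      Finset.sum_congr rfl fun i hi => by rw [ih i (Finset.mem_range.mp hi)]
    rw [heq] at hN
    have h2 := add_left_cancel hN
    have hnz : PowerSeries.coeff n (F ^ n * H) ≠ 0 := by
      rw [coeff_pow_mul_self hF0]
      exact mul_ne_zero (pow_ne_zero _ hF1) hH0
    exact mul_right_cancel₀ hnz h2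
end Aux

open Aux

/-- The identity `λ_n(s) = (n+1) ∑_{k=1}^m (a_k q_k/(q_k - ps)) λ_{n+1}(s - q_k/p)`. -/
theorem stmt8 (m : ℕ) (hm : 1 ≤ m) (p : ℂ) (hp : p ≠ 0) (a q : ℕ → ℂ)
    (hsum : ∑ k ∈ Finset.Icc 1 m, a k = 0)
    (hc1 : ∑ k ∈ Finset.Icc 1 m, a k * q k ≠ 0)
    (w F : PowerSeries ℂ) (hw : PowerSeries.constantCoeff w = 1)
    (hFdef : F = ∑ k ∈ Finset.Icc 1 m, a k • cpow w (-(q k) / p))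
    (hF0 : PowerSeries.constantCoeff F = 0) (hF1 : PowerSeries.coeff 1 F ≠ 0)
    (lam : ℕ → ℂ → ℂ) (hlam0 : ∀ s : ℂ, lam 0 s = 1)
    (hlam : ∀ (s : ℂ) (N : ℕ), PowerSeries.coeff N (cpow w s) =
      ∑ n ∈ Finset.range (N + 1), lam n s * PowerSeries.coeff N (F ^ n)) :
    ∀ (n : ℕ) (s : ℂ), (∀ k ∈ Finset.Icc 1 m, q k - p * s ≠ 0) →
      lam n s = ((n : ℂ) + 1) *
        ∑ k ∈ Finset.Icc 1 m, a k * q k / (q k - p * s) * lam (n + 1) (s - q k / p) := by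
  intro n s hk
  classical
  set c : ℕ → ℂ := fun k => a k * q k / (q k - p * s) with hc
  set G : PowerSeries ℂ := ∑ k ∈ Finset.Icc 1 m, c k • cpow w (s - q k / p) with hG
  set d : ℕ → ℂ := fun j => ∑ k ∈ Finset.Icc 1 m, c k * lam j (s - q k / p) with hd
  have hwne : w ≠ 0 := fun h => by simp [h] at hw
  -- Step A : D G = D F * cpow w s
  have stepA : D G = D F * cpow w s := by
    apply mul_left_cancel₀ hwne
    have hperk : ∀ k ∈ Finset.Icc 1 m, w * D (c k • cpow w (s - q k / p))
        = (-(a k * q k) / p) • (D w * (cpow w s * cpow w (-(q k) / p))) := by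
      intro k hkm
      rw [D_smul, mul_smul_comm, mul_D_cpow w hw, smul_smul]
      have e2 : cpow w (s - q k / p) = cpow w s * cpow w (-(q k) / p) := by
        rw [← cpow_add]
        congr 1
        ring
      rw [e2]
      congr 1
      have h1 := hk k hkm
      simp only [hc]
      field_simp
      ring
    have hperk2 : ∀ k ∈ Finset.Icc 1 m, w * D (a k • cpow w (-(q k) / p))
        = (-(a k * q k) / p) • (D w * cpow w (-(q k) / p)) := by
      intro k _
      rw [D_smul, mul_smul_comm, mul_D_cpow w hw, smul_smul]
      congr 1
      ring
    have hwDF : w * D F = ∑ k ∈ Finset.Icc 1 m,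
        (-(a k * q k) / p) • (D w * cpow w (-(q k) / p)) := by
      rw [hFdef, D_sum, Finset.mul_sum]
      exact Finset.sum_congr rfl hperk2
    calc w * D G = ∑ k ∈ Finset.Icc 1 m,
          (-(a k * q k) / p) • (D w * (cpow w s * cpow w (-(q k) / p))) := by
          rw [hG, D_sum, Finset.mul_sum]
          exact Finset.sum_congr rfl hperk
      _ = (∑ k ∈ Finset.Icc 1 m,
            (-(a k * q k) / p) • (D w * cpow w (-(q k) / p))) * cpow w s := by
          rw [Finset.sum_mul]
          refine Finset.sum_congr rfl fun k _ => ?_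
          rw [smul_mul_assoc]
          congr 1
          ring
      _ = (w * D F) * cpow w s := by rw [hwDF]
      _ = w * (D F * cpow w s) := by ring
  -- extended expansion lemma
  have hlamext : ∀ (σ : ℂ) {j N : ℕ}, j ≤ N → PowerSeries.coeff j (cpow w σ)
      = ∑ n ∈ range (N + 1), lam n σ * PowerSeries.coeff j (F ^ n) := by
    intro σ j N hj
    rw [hlam σ j]
    apply Finset.sum_subset (Finset.range_subset_range.mpr (by omega))
    intro nn hn hn'
    rw [Finset.mem_range] at hn hn'
    rw [coeff_pow_eq_zero hF0 (by omega), mul_zero]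
  -- Claim 1
  have claim1 : ∀ N : ℕ, PowerSeries.coeff N (D G)
      = ∑ nn ∈ range (N + 1),
          (((nn + 1 : ℕ) : ℂ) * d (nn + 1)) * PowerSeries.coeff N (F ^ nn * D F) := by
    intro N
    have e0 : PowerSeries.coeff (N + 1) G
        = ∑ nn ∈ range (N + 2), d nn * PowerSeries.coeff (N + 1) (F ^ nn) := by
      rw [hG, map_sum]
      have h1 : ∀ k ∈ Finset.Icc 1 m,
          PowerSeries.coeff (N + 1) (c k • cpow w (s - q k / p))
          = ∑ nn ∈ range (N + 2),
              (c k * lam nn (s - q k / p)) * PowerSeries.coeff (N + 1) (F ^ nn) := by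
        intro k _
        rw [PowerSeries.coeff_smul, smul_eq_mul, hlam, Finset.mul_sum]
        exact Finset.sum_congr rfl fun nn _ => by ring
      rw [Finset.sum_congr rfl h1, Finset.sum_comm]
      refine Finset.sum_congr rfl fun nn _ => ?_
      simp only [hd]
      rw [Finset.sum_mul]
    rw [coeff_D, e0, Finset.mul_sum]
    have e1 : ∀ nn ∈ range (N + 2), ((N + 1 : ℕ) : ℂ) * (d nn * PowerSeries.coeff (N + 1) (F ^ nn))
        = d nn * PowerSeries.coeff N (D (F ^ nn)) := by
      intro nn _
      rw [coeff_D]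
      ring
    rw [Finset.sum_congr rfl e1, Finset.sum_range_succ']
    rw [pow_zero, D_one, map_zero, mul_zero, add_zero]
    refine Finset.sum_congr rfl fun nn _ => ?_
    rw [coeff_D_pow_succ]
    ring
  -- Claim 2
  have claim2 : ∀ N : ℕ, PowerSeries.coeff N (D F * cpow w s)
      = ∑ nn ∈ range (N + 1), lam nn s * PowerSeries.coeff N (F ^ nn * D F) := by
    intro N
    rw [PowerSeries.coeff_mul]
    have h1 : ∀ x ∈ antidiagonal N,
        PowerSeries.coeff x.1 (D F) * PowerSeries.coeff x.2 (cpow w s)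
        = ∑ nn ∈ range (N + 1),
            lam nn s * (PowerSeries.coeff x.1 (D F) * PowerSeries.coeff x.2 (F ^ nn)) := by
      rintro ⟨i, j⟩ hij
      rw [Finset.HasAntidiagonal.mem_antidiagonal] at hij
      rw [hlamext s (show j ≤ N by omega), Finset.mul_sum]
      exact Finset.sum_congr rfl fun nn _ => by ring
    rw [Finset.sum_congr rfl h1, Finset.sum_comm]
    refine Finset.sum_congr rfl fun nn _ => ?_
    rw [← Finset.mul_sum, ← PowerSeries.coeff_mul, mul_comm (D F) (F ^ nn)]
  have hfinal : ∀ N : ℕ,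
      ∑ nn ∈ range (N + 1), lam nn s * PowerSeries.coeff N (F ^ nn * D F)
      = ∑ nn ∈ range (N + 1),
          (((nn + 1 : ℕ) : ℂ) * d (nn + 1)) * PowerSeries.coeff N (F ^ nn * D F) := by
    intro N
    rw [← claim2, ← claim1, stepA]
  have hDF0 : PowerSeries.coeff 0 (D F) ≠ 0 := by
    rw [coeff_D]
    simpa using hF1
  have hmain := expand_uniq hF0 hF1 hDF0 (fun j => lam j s)
    (fun j => ((j + 1 : ℕ) : ℂ) * d (j + 1)) hfinal n
  rw [hmain]
  simp only [hd, hc]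
  push_cast
  ring
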